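/- Let k, s be positive integers. For each i = 1,…,k let d^i = (d^i_1,…,d^i_s) and t^i = (t^i_1,…,t^i_s) be partitions of nonnegative integers with d^i_j ≥ t^i_j for all j = 1,…,s and i = 1,…,k. Let A = (A_1,…,A_s) and B = (B_1,…,B_s) be partitions of nonnegative integers such that (d^1 − t^1) ∪ (d^2 − t^2) ∪ ⋯ ∪ (d^k − t^k) ≺ A + B. Then there exist partitions f^i = (f^i_1,…,f^i_s), i = 1,…,k, of nonnegative integers such that: (1) d^i_j ≥ f^i_j ≥ t^i_j for all i = 1,…,k and all j; (2) (f^1 − t^1) ∪ (f^2 − t^2) ∪ ⋯ ∪ (f^k − t^k) ≺ A; and (3) (d^1 − f^1) ∪ (d^2 − f^2) ∪ ⋯ ∪ (d^k − f^k) ≺ B. -/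

import Mathlib

/-- The sum of the `j` largest entries of a multiset of nonnegative integers
(realized as the maximum of the sums of submultisets with at most `j` elements). -/
def kMaxSum (M : Multiset ℕ) (j : ℕ) : ℕ :=
  ((M.powerset.filter (fun T => Multiset.card T ≤ j)).map Multiset.sum).sup

/-- Classical majorization of (the decreasing rearrangements of) two multisets of
nonnegative integers: equal total sums, and for every `j` the sum of the `j` largest
entries of `M` is at most the sum of the `j` largest entries of `N`. -/
def Majorized (M N : Multiset ℕ) : Prop :=
  M.sum = N.sum ∧ ∀ j, kMaxSum M j ≤ kMaxSum N j

/-- The multiset of entries of a finite tuple. -/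
def tupleMul {s : ℕ} (a : Fin s → ℕ) : Multiset ℕ := Multiset.map a Finset.univ.val

namespace KM

lemma le_kMaxSum {M T : Multiset ℕ} {j : ℕ} (hT : T ≤ M) (hc : Multiset.card T ≤ j) :
    T.sum ≤ kMaxSum M j := by
  apply Multiset.le_sup
  simp only [Multiset.mem_map, Multiset.mem_filter, Multiset.mem_powerset]
  exact ⟨T, ⟨hT, hc⟩, rfl⟩

lemma kMaxSum_le {M : Multiset ℕ} {j n : ℕ}
    (h : ∀ T, T ≤ M → Multiset.card T ≤ j → T.sum ≤ n) : kMaxSum M j ≤ n := by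
  unfold kMaxSum
  rw [Multiset.sup_le]
  intro b hb
  simp only [Multiset.mem_map, Multiset.mem_filter, Multiset.mem_powerset] at hb
  obtain ⟨T, ⟨h1, h2⟩, rfl⟩ := hb
  exact h T h1 h2

lemma sup_mem {S : Multiset ℕ} (h : S ≠ 0) : S.sup ∈ S := by
  induction S using Multiset.induction with
  | empty => exact absurd rfl h
  | cons a T ih =>
    rcases eq_or_ne T 0 with rfl | hT
    · simp
    · rw [Multiset.sup_cons]
      rcases le_total a T.sup with h1 | h1
      · rw [sup_eq_right.2 h1]
        exact Multiset.mem_cons_of_mem (ih hT)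
      · rw [sup_eq_left.2 h1]; exact Multiset.mem_cons_self a T

lemma exists_opt (M : Multiset ℕ) (j : ℕ) :
    ∃ T, T ≤ M ∧ Multiset.card T ≤ j ∧ T.sum = kMaxSum M j := by
  have h0 : kMaxSum M j ∈ ((M.powerset.filter (fun T => Multiset.card T ≤ j)).map Multiset.sum) := by
    apply sup_mem
    intro h
    have : (0 : Multiset ℕ) ∈ M.powerset.filter (fun T => Multiset.card T ≤ j) := by
      simp
    have := Multiset.mem_map_of_mem Multiset.sum this
    rw [h] at this
    simpa using this
  simp only [Multiset.mem_map, Multiset.mem_filter, Multiset.mem_powerset] at h0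
  obtain ⟨T, ⟨h1, h2⟩, h3⟩ := h0
  exact ⟨T, h1, h2, h3⟩

lemma kMaxSum_zero (M : Multiset ℕ) : kMaxSum M 0 = 0 := by
  apply Nat.le_antisymm _ (Nat.zero_le _)
  apply kMaxSum_le
  intro T _ hc
  interval_cases h : Multiset.card T
  · rw [Multiset.card_eq_zero] at h; simp [h]

lemma kMaxSum_mono_j {M : Multiset ℕ} {j j' : ℕ} (h : j ≤ j') :
    kMaxSum M j ≤ kMaxSum M j' := by
  obtain ⟨T, h1, h2, h3⟩ := exists_opt M j
  rw [← h3]; exact le_kMaxSum h1 (h2.trans h)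

lemma kMaxSum_mono_M {M N : Multiset ℕ} (h : M ≤ N) (j : ℕ) :
    kMaxSum M j ≤ kMaxSum N j := by
  obtain ⟨T, h1, h2, h3⟩ := exists_opt M j
  rw [← h3]; exact le_kMaxSum (h1.trans h) h2

lemma kMaxSum_le_sum (M : Multiset ℕ) (j : ℕ) : kMaxSum M j ≤ M.sum := by
  apply kMaxSum_le
  intro T hT _
  obtain ⟨U, rfl⟩ := Multiset.le_iff_exists_add.1 hT
  simp

lemma kMaxSum_eq_sum {M : Multiset ℕ} {j : ℕ} (h : Multiset.card M ≤ j) :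
    kMaxSum M j = M.sum :=
  Nat.le_antisymm (kMaxSum_le_sum M j) (le_kMaxSum le_rfl h)

lemma kMaxSum_zero_M (j : ℕ) : kMaxSum 0 j = 0 := by
  apply Nat.le_antisymm _ (Nat.zero_le _)
  apply kMaxSum_le
  intro T hT _
  rw [Multiset.le_zero] at hT
  simp [hT]

lemma le_cons_of_not_mem {T N : Multiset ℕ} {a : ℕ} (h : T ≤ a ::ₘ N) (ha : a ∉ T) : T ≤ N := by
  rw [Multiset.le_iff_count] at h ⊢
  intro x
  have := h x
  rcases eq_or_ne x a with rfl | hx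
  · simp [Multiset.count_eq_zero_of_notMem ha]
  · simpa [Multiset.count_cons_of_ne hx] using this

lemma split (a : ℕ) (N : Multiset ℕ) (j : ℕ) :
    kMaxSum (a ::ₘ N) (j+1) = max (kMaxSum N (j+1)) (a + kMaxSum N j) := by
  apply Nat.le_antisymm
  · obtain ⟨T, h1, h2, h3⟩ := exists_opt (a ::ₘ N) (j+1)
    rw [← h3]
    by_cases ha : a ∈ T
    · have hTe : T.erase a ≤ N := by
        have := Multiset.erase_le_erase a h1
        rwa [Multiset.erase_cons_head] at this
      have hce : Multiset.card (T.erase a) ≤ j := by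
        rw [Multiset.card_erase_of_mem ha, Nat.pred_eq_sub_one]
        omega
      have : T.sum = a + (T.erase a).sum := by
        conv_lhs => rw [← Multiset.cons_erase ha]
        simp
      rw [this]
      exact le_max_of_le_right (Nat.add_le_add_left (le_kMaxSum hTe hce) a)
    · exact le_max_of_le_left (le_kMaxSum (le_cons_of_not_mem h1 ha) h2)
  · apply max_le
    · exact kMaxSum_mono_M (Multiset.le_cons_self N a) (j+1)
    · obtain ⟨T, h1, h2, h3⟩ := exists_opt N j
      rw [← h3]
      have : a + T.sum = (a ::ₘ T).sum := by simp
      rw [this]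
      exact le_kMaxSum (Multiset.cons_le_cons a h1) (by simpa using Nat.succ_le_succ h2)

lemma le_of_all_le {N : Multiset ℕ} {a : ℕ} (h : ∀ x ∈ N, x ≤ a) (j : ℕ) :
    kMaxSum N (j+1) ≤ a + kMaxSum N j := by
  obtain ⟨T, h1, h2, h3⟩ := exists_opt N (j+1)
  rw [← h3]
  rcases eq_or_ne T 0 with rfl | hT
  · simp
  · obtain ⟨x, hx⟩ := Multiset.exists_mem_of_ne_zero hT
    have : T.sum = x + (T.erase x).sum := by
      conv_lhs => rw [← Multiset.cons_erase hx]
      simp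
    rw [this]
    have hx2 : x ≤ a := h x (Multiset.mem_of_le h1 hx)
    have : (T.erase x).sum ≤ kMaxSum N j := by
      apply le_kMaxSum ((Multiset.erase_le x T).trans h1)
      rw [Multiset.card_erase_of_mem hx, Nat.pred_eq_sub_one]
      omega
    omega

lemma maxext {N : Multiset ℕ} {a : ℕ} (h : ∀ x ∈ N, x ≤ a) (j : ℕ) :
    kMaxSum (a ::ₘ N) (j+1) = a + kMaxSum N j := by
  rw [split]
  exact max_eq_right (le_of_all_le h j)

lemma cons_le_cons_val {a b : ℕ} (h : a ≤ b) (N : Multiset ℕ) (j : ℕ) :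
    kMaxSum (a ::ₘ N) j ≤ kMaxSum (b ::ₘ N) j := by
  cases j with
  | zero => simp [kMaxSum_zero]
  | succ j =>
    rw [split, split]
    apply max_le
    · exact le_max_left _ _
    · exact le_max_of_le_right (by omega)

lemma le_cons (a : ℕ) (N : Multiset ℕ) (j : ℕ) : kMaxSum N j ≤ kMaxSum (a ::ₘ N) j :=
  kMaxSum_mono_M (Multiset.le_cons_self N a) j

lemma cons_ge_add (a : ℕ) (N : Multiset ℕ) (j : ℕ) :
    a + kMaxSum N j ≤ kMaxSum (a ::ₘ N) (j+1) := by
  rw [split]; exact le_max_right _ _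

lemma concave (M : Multiset ℕ) : ∀ j, kMaxSum M (j+2) + kMaxSum M j ≤ 2 * kMaxSum M (j+1) := by
  induction M using Multiset.strongInductionOn with
  | ih M ih =>
    intro j
    rcases eq_or_ne M 0 with rfl | hM
    · simp [kMaxSum_zero_M]
    · set a := M.sup with ha
      have haM : a ∈ M := sup_mem hM
      have hmax : ∀ x ∈ M.erase a, x ≤ a := fun x hx =>
        Multiset.le_sup (Multiset.mem_of_mem_erase hx)
      have hM2 : M = a ::ₘ M.erase a := (Multiset.cons_erase haM).symm
      cases j with
      | zero =>
        rw [kMaxSum_zero, hM2, maxext hmax 1, maxext hmax 0, kMaxSum_zero]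
        have : kMaxSum (M.erase a) 1 ≤ a + kMaxSum (M.erase a) 0 := le_of_all_le hmax 0
        rw [kMaxSum_zero] at this
        omega
      | succ j =>
        rw [hM2, maxext hmax (j+2), maxext hmax (j+1), maxext hmax j]
        have := ih (M.erase a) (Multiset.erase_lt.2 haM) j
        omega

lemma inc_le {M : Multiset ℕ} {a : ℕ} (h : ∀ x ∈ M, x ≤ a) (j : ℕ) :
    kMaxSum M (j+1) ≤ a + kMaxSum M j := le_of_all_le h j

/-- increment: the (j+1)-st largest element. -/
def inc (M : Multiset ℕ) (j : ℕ) : ℕ := kMaxSum M (j+1) - kMaxSum M j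

lemma inc_spec (M : Multiset ℕ) (j : ℕ) : kMaxSum M (j+1) = kMaxSum M j + inc M j := by
  have : kMaxSum M j ≤ kMaxSum M (j+1) := kMaxSum_mono_j (by omega)
  unfold inc; omega

lemma inc_antitone (M : Multiset ℕ) : ∀ {i i' : ℕ}, i ≤ i' → inc M i' ≤ inc M i := by
  have step : ∀ i, inc M (i+1) ≤ inc M i := by
    intro i
    have := concave M i
    have h1 := inc_spec M i
    have h2 : kMaxSum M (i+2) = kMaxSum M (i+1) + inc M (i+1) := inc_spec M (i+1)
    omega
  intro i i' h
  induction i' with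
  | zero =>
    have : i = 0 := by omega
    subst this
    exact le_rfl
  | succ n ih =>
    rcases Nat.lt_or_ge i (n+1) with h1 | h1
    · exact (step n).trans (ih (by omega))
    · have : i = n + 1 := by omega
      rw [this]

lemma inc_erase {M : Multiset ℕ} {a : ℕ} (haM : a ∈ M) (hmax : ∀ x ∈ M, x ≤ a) :
    ∀ j, inc M (j+1) = inc (M.erase a) j := by
  intro j
  have hm : ∀ x ∈ M.erase a, x ≤ a := fun x hx => hmax x (Multiset.mem_of_mem_erase hx)
  have hM2 : M = a ::ₘ M.erase a := (Multiset.cons_erase haM).symm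
  have e1 : kMaxSum M (j+2) = a + kMaxSum (M.erase a) (j+1) := by
    conv_lhs => rw [hM2]
    exact maxext hm (j+1)
  have e2 : kMaxSum M (j+1) = a + kMaxSum (M.erase a) j := by
    conv_lhs => rw [hM2]
    exact maxext hm j
  have e3 : kMaxSum M (j+1+1) = kMaxSum M (j+2) := rfl
  unfold inc
  rw [e3, e1, e2]
  omega

lemma inc_zero {M : Multiset ℕ} {a : ℕ} (haM : a ∈ M) (hmax : ∀ x ∈ M, x ≤ a) :
    inc M 0 = a := by
  have hm : ∀ x ∈ M.erase a, x ≤ a := fun x hx => hmax x (Multiset.mem_of_mem_erase hx)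
  have hM2 : M = a ::ₘ M.erase a := (Multiset.cons_erase haM).symm
  have e1 : kMaxSum M (0+1) = a + kMaxSum (M.erase a) 0 := by
    conv_lhs => rw [hM2]
    exact maxext hm 0
  unfold inc
  rw [e1, kMaxSum_zero, kMaxSum_zero]
  omega

lemma range_succ' (n : ℕ) : Multiset.range (n+1) = 0 ::ₘ (Multiset.range n).map Nat.succ := by
  have h : List.range (n+1) = 0 :: List.map Nat.succ (List.range n) := List.range_succ_eq_map
  rw [Multiset.range, h]
  rfl

lemma incEnum (M : Multiset ℕ) : (Multiset.range (Multiset.card M)).map (inc M) = M := by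
  suffices H : ∀ n (M : Multiset ℕ), Multiset.card M = n → (Multiset.range (Multiset.card M)).map (inc M) = M by
    exact H _ M rfl
  intro n
  induction n using Nat.strong_induction_on with
  | _ n ih =>
  intro M hn
  cases n with
  | zero => rw [Multiset.card_eq_zero] at hn; simp [hn]
  | succ n =>
    have hM : M ≠ 0 := by intro h; rw [h] at hn; simp at hn
    set a := M.sup with ha
    have haM : a ∈ M := sup_mem hM
    have hmax : ∀ x ∈ M, x ≤ a := fun x hx => Multiset.le_sup hx
    have hcard : Multiset.card (M.erase a) = n := by
      rw [Multiset.card_erase_of_mem haM, hn]; rfl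
    have hrec := ih n (by omega) (M.erase a) hcard
    rw [hcard] at hrec
    rw [hn, range_succ', Multiset.map_cons, Multiset.map_map, inc_zero haM hmax]
    have hshift : (Multiset.range n).map (inc M ∘ Nat.succ) = (Multiset.range n).map (inc (M.erase a)) := by
      apply Multiset.map_congr rfl
      intro x _
      exact inc_erase haM hmax x
    rw [hshift, hrec]
    exact Multiset.cons_erase haM

lemma sum_range_inc (M : Multiset ℕ) : ∀ j, ((Multiset.range j).map (inc M)).sum = kMaxSum M j := by
  intro j
  induction j with
  | zero => simp [kMaxSum_zero]
  | succ n ih =>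
    rw [Multiset.range_succ, Multiset.map_cons, Multiset.sum_cons, ih, inc_spec]
    omega

lemma eqOfP {M N : Multiset ℕ} (hc : Multiset.card M = Multiset.card N)
    (h : ∀ j, kMaxSum M j = kMaxSum N j) : M = N := by
  have hinc : inc M = inc N := by
    funext j; unfold inc; rw [h, h]
  rw [← incEnum M, ← incEnum N, hc, hinc]

lemma cons_zero (M : Multiset ℕ) (j : ℕ) : kMaxSum (0 ::ₘ M) j = kMaxSum M j := by
  cases j with
  | zero => rw [kMaxSum_zero, kMaxSum_zero]
  | succ j =>
    rw [split]
    simp only [Nat.zero_add]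
    exact max_eq_left (kMaxSum_mono_j (by omega))

lemma pad (M : Multiset ℕ) (n : ℕ) (j : ℕ) :
    kMaxSum (M + Multiset.replicate n 0) j = kMaxSum M j := by
  induction n with
  | zero => simp
  | succ n ih =>
    have h2 : M + Multiset.replicate (n+1) 0 = 0 ::ₘ (M + Multiset.replicate n 0) := by
      rw [Multiset.replicate_succ, add_comm, Multiset.cons_add, add_comm]
    rw [h2, cons_zero, ih]

lemma rhs_mid {a b : ℕ} (R : Multiset ℕ) (i : ℕ) :
    max a b + kMaxSum R i ≤ kMaxSum (a ::ₘ b ::ₘ R) (i+1) := by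
  rcases le_total a b with h | h
  · rw [max_eq_right h, Multiset.cons_swap]
    exact (cons_ge_add b R i).trans
      (kMaxSum_mono_M (Multiset.cons_le_cons b (Multiset.le_cons_self R a)) (i+1))
  · rw [max_eq_left h]
    calc a + kMaxSum R i ≤ a + kMaxSum (b ::ₘ R) i := by
          have := le_cons b R i
          omega
      _ ≤ kMaxSum (a ::ₘ b ::ₘ R) (i+1) := cons_ge_add a _ i

lemma rhs_two {a b : ℕ} (R : Multiset ℕ) (i : ℕ) :
    a + b + kMaxSum R i ≤ kMaxSum (a ::ₘ b ::ₘ R) (i+2) := by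
  have h1 : b + kMaxSum R i ≤ kMaxSum (b ::ₘ R) (i+1) := cons_ge_add b R i
  have h2 : a + kMaxSum (b ::ₘ R) (i+1) ≤ kMaxSum (a ::ₘ b ::ₘ R) (i+2) := cons_ge_add a _ (i+1)
  omega

lemma pairdom {a b a' b' : ℕ} (hs : a' + b' = a + b) (h1 : a' ≤ max a b) (h2 : b' ≤ max a b)
    (R : Multiset ℕ) : ∀ j, kMaxSum (a' ::ₘ b' ::ₘ R) j ≤ kMaxSum (a ::ₘ b ::ₘ R) j := by
  intro j
  cases j with
  | zero => rw [kMaxSum_zero, kMaxSum_zero]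
  | succ j =>
    have hR : kMaxSum R (j+1) ≤ kMaxSum (a ::ₘ b ::ₘ R) (j+1) :=
      (le_cons b R (j+1)).trans (le_cons a _ _)
    have L1 := split a' (b' ::ₘ R) j
    have L2 := split b' R j
    have hbranch1 : kMaxSum (b' ::ₘ R) (j+1) ≤ kMaxSum (a ::ₘ b ::ₘ R) (j+1) := by
      rw [L2]
      have := rhs_mid (a := a) (b := b) R j
      apply max_le hR
      omega
    have hbranch2 : a' + kMaxSum (b' ::ₘ R) j ≤ kMaxSum (a ::ₘ b ::ₘ R) (j+1) := by
      cases j with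
      | zero =>
        rw [kMaxSum_zero]
        have := rhs_mid (a := a) (b := b) R 0
        have h0 : kMaxSum R 0 = 0 := kMaxSum_zero R
        omega
      | succ i =>
        have L3 := split b' R i
        have hm := rhs_mid (a := a) (b := b) R (i+1)
        have ht : a + b + kMaxSum R i ≤ kMaxSum (a ::ₘ b ::ₘ R) (i+1+1) :=
          rhs_two (a := a) (b := b) R i
        rw [L3]
        rcases le_total (kMaxSum R (i+1)) (b' + kMaxSum R i) with hc | hc
        · rw [max_eq_right hc]; omega
        · rw [max_eq_left hc]; omega
    rw [L1]
    exact max_le hbranch1 hbranch2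

lemma exists_le_add {T X Y : Multiset ℕ} (h : T ≤ X + Y) :
    ∃ T1 T2, T = T1 + T2 ∧ T1 ≤ X ∧ T2 ≤ Y := by
  induction T using Multiset.induction generalizing X Y with
  | empty => exact ⟨0, 0, by simp⟩
  | cons a T ih =>
    have haXY : a ∈ X + Y := Multiset.mem_of_le h (Multiset.mem_cons_self a T)
    have hT : T ≤ (X + Y).erase a := by
      have := Multiset.erase_le_erase a h
      rwa [Multiset.erase_cons_head] at this
    rcases Multiset.mem_add.1 haXY with hX | hY
    · have heq : (X + Y).erase a = X.erase a + Y := by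
        rw [Multiset.erase_add_left_pos Y hX]
      rw [heq] at hT
      obtain ⟨T1, T2, rfl, hT1, hT2⟩ := ih hT
      refine ⟨a ::ₘ T1, T2, by rw [Multiset.cons_add], ?_, hT2⟩
      calc a ::ₘ T1 ≤ a ::ₘ X.erase a := Multiset.cons_le_cons a hT1
        _ = X := Multiset.cons_erase hX
    · have heq : (X + Y).erase a = X + Y.erase a := by
        rw [Multiset.erase_add_right_pos X hY]
      rw [heq] at hT
      obtain ⟨T1, T2, rfl, hT1, hT2⟩ := ih hT
      refine ⟨T1, a ::ₘ T2, by rw [Multiset.add_cons], hT1, ?_⟩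
      calc a ::ₘ T2 ≤ a ::ₘ Y.erase a := Multiset.cons_le_cons a hT2
        _ = Y := Multiset.cons_erase hY

lemma addDom {X X' Y Y' : Multiset ℕ}
    (hX : ∀ j, kMaxSum X j ≤ kMaxSum X' j) (hY : ∀ j, kMaxSum Y j ≤ kMaxSum Y' j) :
    ∀ j, kMaxSum (X + Y) j ≤ kMaxSum (X' + Y') j := by
  intro j
  obtain ⟨T, hT, hc, hsum⟩ := exists_opt (X + Y) j
  rw [← hsum]
  obtain ⟨T1, T2, rfl, h1, h2⟩ := exists_le_add hT
  obtain ⟨U1, hU1, hcU1, hsU1⟩ := exists_opt X' (Multiset.card T1)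
  obtain ⟨U2, hU2, hcU2, hsU2⟩ := exists_opt Y' (Multiset.card T2)
  have key : (U1 + U2).sum ≥ T1.sum + T2.sum := by
    have b1 : T1.sum ≤ kMaxSum X (Multiset.card T1) := le_kMaxSum h1 le_rfl
    have b2 : T2.sum ≤ kMaxSum Y (Multiset.card T2) := le_kMaxSum h2 le_rfl
    have := hX (Multiset.card T1)
    have := hY (Multiset.card T2)
    rw [Multiset.sum_add]
    omega
  have hle : (U1 + U2).sum ≤ kMaxSum (X' + Y') j := by
    apply le_kMaxSum (add_le_add hU1 hU2)
    rw [Multiset.card_add]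
    rw [Multiset.card_add] at hc
    omega
  rw [Multiset.sum_add]
  omega

/-- Unit transfer making a multiset strictly more balanced. -/
def Step (C C' : Multiset ℕ) : Prop :=
  ∃ u v E, v + 1 ≤ u ∧ C = (u+1) ::ₘ v ::ₘ E ∧ C' = u ::ₘ (v+1) ::ₘ E

lemma stepP {C C' : Multiset ℕ} (h : Step C C') (j : ℕ) : kMaxSum C' j ≤ kMaxSum C j := by
  obtain ⟨u, v, E, huv, rfl, rfl⟩ := h
  apply pairdom (by omega) _ _ E j
  · rw [max_eq_left (by omega : v ≤ u + 1)]; omega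
  · rw [max_eq_left (by omega : v ≤ u + 1)]; omega

lemma step_sum {C C' : Multiset ℕ} (h : Step C C') : C'.sum = C.sum := by
  obtain ⟨u, v, E, huv, rfl, rfl⟩ := h
  simp only [Multiset.sum_cons]
  omega

lemma step_card {C C' : Multiset ℕ} (h : Step C C') : Multiset.card C' = Multiset.card C := by
  obtain ⟨u, v, E, huv, rfl, rfl⟩ := h
  simp

lemma chain {M C : Multiset ℕ} (hcard : Multiset.card M = Multiset.card C)
    (hsum : M.sum = C.sum) (hP : ∀ j, kMaxSum M j ≤ kMaxSum C j) :
    Relation.ReflTransGen Step C M := by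
  classical
  suffices H : ∀ (n : ℕ) (C : Multiset ℕ), Multiset.card M = Multiset.card C →
      M.sum = C.sum → (∀ j, kMaxSum M j ≤ kMaxSum C j) →
      (∑ j ∈ Finset.range (Multiset.card C + 1), (kMaxSum C j - kMaxSum M j)) = n →
      Relation.ReflTransGen Step C M by
    exact H _ C hcard hsum hP rfl
  clear hcard hsum hP C
  intro n
  induction n using Nat.strong_induction_on with
  | _ n ih =>
  intro C hcard hsum hP hmeas
  by_cases hMC : M = C
  · subst hMC; exact Relation.ReflTransGen.refl
  -- setup
  set n0 := Multiset.card C with hn0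
  have hPeqhigh : ∀ j, n0 ≤ j → kMaxSum M j = kMaxSum C j := by
    intro j hj
    rw [kMaxSum_eq_sum (by omega : Multiset.card M ≤ j), kMaxSum_eq_sum (by omega : Multiset.card C ≤ j), hsum]
  have hex : ∃ j, kMaxSum M j < kMaxSum C j := by
    by_contra hno
    push_neg at hno
    exact hMC (eqOfP hcard (fun j => le_antisymm (hP j) (hno j)))
  set js := Nat.find hex with hjs
  have hjs_spec : kMaxSum M js < kMaxSum C js := Nat.find_spec hex
  have hprev : ∀ i, i < js → kMaxSum M i = kMaxSum C i := by
    intro i hi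
    exact le_antisymm (hP i) (le_of_not_gt (Nat.find_min hex hi))
  have hjs_pos : 1 ≤ js := by
    rcases Nat.eq_zero_or_pos js with h0 | h0
    · rw [h0] at hjs_spec; rw [kMaxSum_zero, kMaxSum_zero] at hjs_spec; omega
    · exact h0
  have hjs_lt : js < n0 := by
    by_contra hge
    have := hPeqhigh js (by omega)
    omega
  obtain ⟨jj, hjj⟩ : ∃ jj, js = jj + 1 := ⟨js - 1, by omega⟩
  set γ := inc C jj with hγ
  have hex2 : ∃ j, js < j ∧ kMaxSum M j = kMaxSum C j := ⟨n0, hjs_lt, hPeqhigh n0 le_rfl⟩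
  set r' := Nat.find hex2 with hr'
  have hr'_spec : js < r' ∧ kMaxSum M r' = kMaxSum C r' := Nat.find_spec hex2
  have hr'_le : r' ≤ n0 := Nat.find_le ⟨hjs_lt, hPeqhigh n0 le_rfl⟩
  have hstrict : ∀ j, js ≤ j → j < r' → kMaxSum M j < kMaxSum C j := by
    intro j h1 h2
    rcases Nat.lt_or_ge js j with h3 | h3
    · have := Nat.find_min hex2 h2
      push_neg at this
      have h4 := this h3
      have := hP j
      omega
    · have : j = js := by omega
      rw [this]; exact hjs_spec
  obtain ⟨rr, hrr⟩ : ∃ rr, r' = rr + 1 := ⟨r' - 1, by omega⟩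
  set δ := inc C rr with hδ
  have hjjrr : jj < rr := by omega
  -- Claim 1 : δ + 2 ≤ γ
  have hincMjj : inc M jj + 1 ≤ γ := by
    have h1 : kMaxSum M jj = kMaxSum C jj := hprev jj (by omega)
    have h2 := inc_spec M jj
    have h3 := inc_spec C jj
    rw [← hjj] at h2 h3
    omega
  have hincMrr : δ + 1 ≤ inc M rr := by
    have h1 : kMaxSum M rr < kMaxSum C rr := hstrict rr (by omega) (by omega)
    have h2 := inc_spec M rr
    have h3 := inc_spec C rr
    rw [← hrr] at h2 h3
    have h4 := hr'_spec.2
    omega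
  have hδγ : δ + 2 ≤ γ := by
    have := inc_antitone M (le_of_lt hjjrr)
    omega
  -- membership
  have hmemγ : γ ∈ C := by
    have : inc C jj ∈ (Multiset.range n0).map (inc C) := by
      apply Multiset.mem_map_of_mem
      rw [Multiset.mem_range]; omega
    rwa [incEnum] at this
  have hmemδ : δ ∈ C.erase γ := by
    rw [Multiset.mem_erase_of_ne (by omega)]
    have : inc C rr ∈ (Multiset.range n0).map (inc C) := by
      apply Multiset.mem_map_of_mem
      rw [Multiset.mem_range]; omega
    rwa [incEnum] at this
  set E := (C.erase γ).erase δ with hE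
  have hCE : C = γ ::ₘ δ ::ₘ E := by
    rw [hE, Multiset.cons_erase hmemδ, Multiset.cons_erase hmemγ]
  obtain ⟨g, hg⟩ : ∃ g, γ = g + 1 := ⟨γ - 1, by omega⟩
  set C' := g ::ₘ (δ+1) ::ₘ E with hC'
  have hstep : Step C C' := ⟨g, δ, E, by omega, by rw [hCE, hg], rfl⟩
  -- r0
  set r0 := Nat.findGreatest (fun i => inc C i = γ) (n0 - 1) with hr0
  have hr0_ge : jj ≤ r0 := Nat.le_findGreatest (by omega) rfl
  have hr0_spec : inc C r0 = γ := Nat.findGreatest_spec (P := fun i => inc C i = γ) (by omega : jj ≤ n0 - 1) rfl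
  have hr0_le : r0 ≤ n0 - 1 := Nat.findGreatest_le _
  have hr0rr : r0 < rr := by
    by_contra hge
    have := inc_antitone C (le_of_not_gt hge)
    rw [hr0_spec] at this
    omega
  -- key region estimates
  have hkey : ∀ j, kMaxSum M j ≤ kMaxSum C' j := by
    intro j
    rcases Nat.eq_zero_or_pos j with rfl | hjpos
    · rw [kMaxSum_zero, kMaxSum_zero]
    rcases Nat.lt_or_ge j (n0 + 1) with hjn | hjn
    swap
    · -- j > n0 : sums
      have h1 := hPeqhigh j (by omega)
      have h2 : kMaxSum C' j = C'.sum := kMaxSum_eq_sum (by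
        have := step_card hstep
        omega)
      have h3 : kMaxSum C j = C.sum := kMaxSum_eq_sum (by omega)
      rw [h1, h3, h2, step_sum hstep]
    rcases le_or_gt j r0 with hA | hA
    · -- Case A : j ≤ r0 : P C' j ≥ P C j
      have hidx : r0 ::ₘ rr ::ₘ Multiset.range j ≤ Multiset.range n0 := by
        rw [Multiset.le_iff_count]
        intro x
        have hnodup : Multiset.Nodup (r0 ::ₘ rr ::ₘ Multiset.range j) := by
          rw [Multiset.nodup_cons, Multiset.nodup_cons]
          refine ⟨?_, ?_, Multiset.nodup_range j⟩
          · rw [Multiset.mem_cons, Multiset.mem_range]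
            push_neg
            exact ⟨by omega, by omega⟩
          · rw [Multiset.mem_range]; omega
        have hsub : ∀ y ∈ (r0 ::ₘ rr ::ₘ Multiset.range j), y ∈ Multiset.range n0 := by
          intro y hy
          rw [Multiset.mem_cons, Multiset.mem_cons, Multiset.mem_range] at hy
          rw [Multiset.mem_range]
          rcases hy with rfl | rfl | h
          · omega
          · omega
          · omega
        by_cases hx : x ∈ (r0 ::ₘ rr ::ₘ Multiset.range j)
        · have h1 : Multiset.count x (r0 ::ₘ rr ::ₘ Multiset.range j) = 1 :=
            Multiset.count_eq_one_of_mem hnodup hx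
          have h2 : Multiset.count x (Multiset.range n0) = 1 :=
            Multiset.count_eq_one_of_mem (Multiset.nodup_range n0) (hsub x hx)
          omega
        · rw [Multiset.count_eq_zero_of_notMem hx]
          omega
      have hTle0 : γ ::ₘ δ ::ₘ (Multiset.range j).map (inc C) ≤ C := by
        have := Multiset.map_le_map (f := inc C) hidx
        rw [incEnum] at this
        rw [Multiset.map_cons, Multiset.map_cons, hr0_spec] at this
        rwa [show inc C rr = δ from rfl] at this
      have hTle : (Multiset.range j).map (inc C) ≤ E := by
        have s1 := Multiset.erase_le_erase γ hTle0
        rw [Multiset.erase_cons_head, ← Multiset.cons_erase hmemδ] at s1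
        exact (Multiset.cons_le_cons_iff δ).1 s1
      have hPE : kMaxSum C j ≤ kMaxSum E j := by
        have h1 : ((Multiset.range j).map (inc C)).sum = kMaxSum C j := sum_range_inc C j
        rw [← h1]
        exact le_kMaxSum hTle (by simp)
      calc kMaxSum M j ≤ kMaxSum C j := hP j
        _ ≤ kMaxSum E j := hPE
        _ ≤ kMaxSum C' j := (le_cons (δ+1) E j).trans (le_cons g _ j)
    rcases Nat.lt_or_ge j r' with hB | hB
    · -- Case B : r0 < j < r' : strict
      have hstrictj := hstrict j (by omega) hB
      obtain ⟨i, rfl⟩ : ∃ i, j = i + 1 := ⟨j - 1, by omega⟩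
      have hCj : kMaxSum C (i+1) = max (kMaxSum (δ ::ₘ E) (i+1)) (γ + kMaxSum (δ ::ₘ E) i) := by
        rw [hCE]; exact split γ _ i
      have hC'j : kMaxSum C' (i+1) = max (kMaxSum ((δ+1) ::ₘ E) (i+1)) (g + kMaxSum ((δ+1) ::ₘ E) i) := split g _ i
      have m1 : kMaxSum (δ ::ₘ E) (i+1) ≤ kMaxSum ((δ+1) ::ₘ E) (i+1) := cons_le_cons_val (by omega) E (i+1)
      have m2 : kMaxSum (δ ::ₘ E) i ≤ kMaxSum ((δ+1) ::ₘ E) i := cons_le_cons_val (by omega) E i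
      have hb : kMaxSum C (i+1) ≤ kMaxSum C' (i+1) + 1 := by
        rw [hCj, hC'j]
        apply max_le
        · have := le_max_left (kMaxSum ((δ+1) ::ₘ E) (i+1)) (g + kMaxSum ((δ+1) ::ₘ E) i)
          omega
        · have := le_max_right (kMaxSum ((δ+1) ::ₘ E) (i+1)) (g + kMaxSum ((δ+1) ::ₘ E) i)
          omega
      omega
    · -- Case C : r' ≤ j ≤ n0
      obtain ⟨i, rfl⟩ : ∃ i, j = i + 2 := ⟨j - 2, by omega⟩
      have hjjmem : jj ∈ Multiset.range (i+2) := by rw [Multiset.mem_range]; omega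
      have hrrmem : rr ∈ (Multiset.range (i+2)).erase jj := by
        rw [Multiset.mem_erase_of_ne (by omega), Multiset.mem_range]; omega
      set T0 := ((Multiset.range (i+2)).erase jj).erase rr with hT0
      have hdecomp : Multiset.range (i+2) = jj ::ₘ rr ::ₘ T0 := by
        rw [hT0, Multiset.cons_erase hrrmem, Multiset.cons_erase hjjmem]
      have hmapdecomp : (Multiset.range (i+2)).map (inc C) = γ ::ₘ δ ::ₘ T0.map (inc C) := by
        rw [hdecomp, Multiset.map_cons, Multiset.map_cons]
      have hrangele : (Multiset.range (i+2)).map (inc C) ≤ C := by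
        have := Multiset.map_le_map (f := inc C) ((Multiset.range_le).2 (show i+2 ≤ n0 by omega))
        rwa [incEnum] at this
      have hTle : T0.map (inc C) ≤ E := by
        have h5 : γ ::ₘ δ ::ₘ T0.map (inc C) ≤ γ ::ₘ δ ::ₘ E := by
          rw [← hmapdecomp, ← hCE]; exact hrangele
        rwa [Multiset.cons_le_cons_iff, Multiset.cons_le_cons_iff] at h5
      have hsumT : γ + δ + (T0.map (inc C)).sum = kMaxSum C (i+2) := by
        rw [← sum_range_inc C (i+2), hmapdecomp, Multiset.sum_cons, Multiset.sum_cons]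
        omega
      have hcardT : Multiset.card (T0.map (inc C)) = i := by
        have h6 := congrArg Multiset.card hdecomp
        rw [Multiset.card_range, Multiset.card_cons, Multiset.card_cons] at h6
        rw [Multiset.card_map]
        omega
      have h1 : (T0.map (inc C)).sum ≤ kMaxSum E i := le_kMaxSum hTle (by omega)
      have h2 : (δ+1) + kMaxSum E i ≤ kMaxSum ((δ+1) ::ₘ E) (i+1) := cons_ge_add _ E i
      have h3 : g + kMaxSum ((δ+1) ::ₘ E) (i+1) ≤ kMaxSum C' (i+2) := cons_ge_add g _ (i+1)
      have h4 := hP (i+2)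
      omega
  -- measure decrease and recursion
  have hC'card : Multiset.card C' = n0 := step_card hstep
  have hC'sum : C'.sum = C.sum := step_sum hstep
  have hne : C' ≠ C := by
    intro heq
    have h1 : Multiset.count γ C' = Multiset.count γ E := by
      rw [hC', Multiset.count_cons_of_ne (by omega), Multiset.count_cons_of_ne (by omega)]
    have h2 : Multiset.count γ C = Multiset.count γ E + 1 := by
      rw [hCE, Multiset.count_cons_self, Multiset.count_cons_of_ne (by omega)]
    rw [heq, h2] at h1
    omega
  have hstrictj0 : ∃ j0, j0 ≤ n0 ∧ kMaxSum C' j0 < kMaxSum C j0 := by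
    by_contra hno
    push_neg at hno
    apply hne
    apply eqOfP (by rw [hC'card])
    intro j
    rcases le_or_gt j n0 with h | h
    · exact le_antisymm (stepP hstep j) (hno j h)
    · rw [kMaxSum_eq_sum (by omega : Multiset.card C' ≤ j),
        kMaxSum_eq_sum (by omega : Multiset.card C ≤ j), hC'sum]
  have hlt : (∑ j ∈ Finset.range (n0 + 1), (kMaxSum C' j - kMaxSum M j)) < n := by
    rw [← hmeas]
    apply Finset.sum_lt_sum
    · intro i _
      have := stepP hstep i
      have := hkey i
      omega
    · obtain ⟨j0, hj0n, hj0⟩ := hstrictj0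
      refine ⟨j0, Finset.mem_range.2 (by omega), ?_⟩
      have := hkey j0
      omega
  exact Relation.ReflTransGen.head hstep
    (ih _ hlt C' (by rw [hC'card]; exact hcard) (by rw [hC'sum]; exact hsum) hkey (by rw [hC'card]))

abbrev psum (p : ℕ × ℕ) : ℕ := p.1 + p.2

lemma goodStep {N N' : Multiset ℕ} (h : Step N N') (Z : Multiset (ℕ × ℕ))
    (hZ : Z.map psum = N) :
    ∃ Z' : Multiset (ℕ × ℕ), Z'.map psum = N' ∧
      (Z'.map Prod.fst).sum = (Z.map Prod.fst).sum ∧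
      (∀ j, kMaxSum (Z'.map Prod.fst) j ≤ kMaxSum (Z.map Prod.fst) j) ∧
      (Z'.map Prod.snd).sum = (Z.map Prod.snd).sum ∧
      (∀ j, kMaxSum (Z'.map Prod.snd) j ≤ kMaxSum (Z.map Prod.snd) j) := by
  obtain ⟨u, v, E, huv, hN, hN'⟩ := h
  have hmem : (u+1) ∈ Z.map psum := by rw [hZ, hN]; exact Multiset.mem_cons_self _ _
  obtain ⟨p, hpZ, hp⟩ := Multiset.mem_map.1 hmem
  set Z1 := Z.erase p with hZ1
  have hZc : Z = p ::ₘ Z1 := (Multiset.cons_erase hpZ).symm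
  have hZ1map : Z1.map psum = v ::ₘ E := by
    have : Z.map psum = psum p ::ₘ Z1.map psum := by rw [hZc, Multiset.map_cons]
    rw [hZ, hN, hp] at this
    exact (Multiset.cons_inj_right _).1 this.symm
  have hmem2 : v ∈ Z1.map psum := by rw [hZ1map]; exact Multiset.mem_cons_self _ _
  obtain ⟨q, hqZ, hq⟩ := Multiset.mem_map.1 hmem2
  set Z2 := Z1.erase q with hZ2
  have hZ1c : Z1 = q ::ₘ Z2 := (Multiset.cons_erase hqZ).symm
  have hZ2map : Z2.map psum = E := by
    have : Z1.map psum = psum q ::ₘ Z2.map psum := by rw [hZ1c, Multiset.map_cons]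
    rw [hZ1map, hq] at this
    exact (Multiset.cons_inj_right _).1 this.symm
  have hsplit : p.1 + p.2 = u + 1 := hp
  have hsplit2 : q.1 + q.2 = v := hq
  have hcase : q.1 + 1 ≤ p.1 ∨ q.2 + 1 ≤ p.2 := by omega
  have hZfst : Z.map Prod.fst = p.1 ::ₘ q.1 ::ₘ Z2.map Prod.fst := by
    rw [hZc, hZ1c, Multiset.map_cons, Multiset.map_cons]
  have hZsnd : Z.map Prod.snd = p.2 ::ₘ q.2 ::ₘ Z2.map Prod.snd := by
    rw [hZc, hZ1c, Multiset.map_cons, Multiset.map_cons]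
  rcases hcase with hc | hc
  · refine ⟨(p.1 - 1, p.2) ::ₘ (q.1 + 1, q.2) ::ₘ Z2, ?_, ?_, ?_, ?_, ?_⟩
    · rw [Multiset.map_cons, Multiset.map_cons, hZ2map, hN']
      show (p.1 - 1 + p.2) ::ₘ (q.1 + 1 + q.2) ::ₘ E = u ::ₘ (v+1) ::ₘ E
      congr 1 <;> [omega; (congr 1; omega)]
    · rw [Multiset.map_cons, Multiset.map_cons, hZfst]
      simp only [Multiset.sum_cons]
      omega
    · intro j
      rw [Multiset.map_cons, Multiset.map_cons, hZfst]
      apply pairdom (by omega) _ _ _ j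
      · rw [max_eq_left (by omega : q.1 ≤ p.1)]; omega
      · rw [max_eq_left (by omega : q.1 ≤ p.1)]; omega
    · rw [Multiset.map_cons, Multiset.map_cons, hZsnd]
    · intro j
      rw [Multiset.map_cons, Multiset.map_cons, hZsnd]
  · refine ⟨(p.1, p.2 - 1) ::ₘ (q.1, q.2 + 1) ::ₘ Z2, ?_, ?_, ?_, ?_, ?_⟩
    · rw [Multiset.map_cons, Multiset.map_cons, hZ2map, hN']
      show (p.1 + (p.2 - 1)) ::ₘ (q.1 + (q.2 + 1)) ::ₘ E = u ::ₘ (v+1) ::ₘ E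
      congr 1 <;> [omega; (congr 1; omega)]
    · rw [Multiset.map_cons, Multiset.map_cons, hZfst]
    · intro j
      rw [Multiset.map_cons, Multiset.map_cons, hZfst]
    · rw [Multiset.map_cons, Multiset.map_cons, hZsnd]
      simp only [Multiset.sum_cons]
      omega
    · intro j
      rw [Multiset.map_cons, Multiset.map_cons, hZsnd]
      apply pairdom (by omega) _ _ _ j
      · rw [max_eq_left (by omega : q.2 ≤ p.2)]; omega
      · rw [max_eq_left (by omega : q.2 ≤ p.2)]; omega

lemma goodChain {N N' : Multiset ℕ} (h : Relation.ReflTransGen Step N N') (Z : Multiset (ℕ × ℕ))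
    (hZ : Z.map psum = N) :
    ∃ Z' : Multiset (ℕ × ℕ), Z'.map psum = N' ∧
      (Z'.map Prod.fst).sum = (Z.map Prod.fst).sum ∧
      (∀ j, kMaxSum (Z'.map Prod.fst) j ≤ kMaxSum (Z.map Prod.fst) j) ∧
      (Z'.map Prod.snd).sum = (Z.map Prod.snd).sum ∧
      (∀ j, kMaxSum (Z'.map Prod.snd) j ≤ kMaxSum (Z.map Prod.snd) j) := by
  induction h with
  | refl => exact ⟨Z, hZ, rfl, fun j => le_rfl, rfl, fun j => le_rfl⟩
  | tail hstep1 hstep ih =>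
    obtain ⟨Z1, h1, h2, h3, h4, h5⟩ := ih
    obtain ⟨Z2, g1, g2, g3, g4, g5⟩ := goodStep hstep Z1 h1
    exact ⟨Z2, g1, g2.trans h2, fun j => (g3 j).trans (h3 j), g4.trans h4,
      fun j => (g5 j).trans (h5 j)⟩

lemma ext {ι : Type*} [DecidableEq ι] {u : Multiset ι} (hu : u.Nodup)
    {Z : Multiset (ℕ × ℕ)} {F : ι → ℕ} (h : u.map F ≤ Z.map psum) :
    ∃ g : ι → ℕ × ℕ, (∀ a ∈ u, (g a).1 + (g a).2 = F a) ∧ u.map g ≤ Z := by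
  induction u using Multiset.induction generalizing Z with
  | empty => exact ⟨fun _ => (0, 0), by simp, by simp⟩
  | cons a u ih =>
    rw [Multiset.nodup_cons] at hu
    rw [Multiset.map_cons] at h
    have hmem : F a ∈ Z.map psum := Multiset.mem_of_le h (Multiset.mem_cons_self _ _)
    obtain ⟨p, hpZ, hp⟩ := Multiset.mem_map.1 hmem
    have hZc : Z = p ::ₘ Z.erase p := (Multiset.cons_erase hpZ).symm
    have h2 : u.map F ≤ (Z.erase p).map psum := by
      have h3 := Multiset.erase_le_erase (F a) h
      rw [Multiset.erase_cons_head] at h3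
      have h4 : (Z.map psum).erase (F a) = (Z.erase p).map psum := by
        conv_lhs => rw [hZc]
        rw [Multiset.map_cons, hp, Multiset.erase_cons_head]
      rwa [h4] at h3
    obtain ⟨g', hg'1, hg'2⟩ := ih hu.2 h2
    refine ⟨Function.update g' a p, ?_, ?_⟩
    · intro b hb
      rcases Multiset.mem_cons.1 hb with rfl | hb'
      · rw [Function.update_self]; exact hp
      · rw [Function.update_of_ne (by rintro rfl; exact hu.1 hb')]
        exact hg'1 b hb'
    · rw [Multiset.map_cons, Function.update_self]
      have : u.map (Function.update g' a p) = u.map g' :=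
        Multiset.map_congr rfl (fun b hb =>
          Function.update_of_ne (by rintro rfl; exact hu.1 hb) _ _)
      rw [this]
      calc p ::ₘ u.map g' ≤ p ::ₘ Z.erase p := Multiset.cons_le_cons p hg'2
        _ = Z := Multiset.cons_erase hpZ

lemma sum_map_add' (W : Multiset (ℕ × ℕ)) :
    (W.map psum).sum = (W.map Prod.fst).sum + (W.map Prod.snd).sum := by
  induction W using Multiset.induction with
  | empty => simp
  | cons a W ih =>
    simp only [Multiset.map_cons, Multiset.sum_cons, ih]
    show a.1 + a.2 + _ = _
    omega

lemma coreAssign {ι : Type*} [Fintype ι] [DecidableEq ι] (m : ι → ℕ) (Z0 : Multiset (ℕ × ℕ))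
    (hsum : (Multiset.map m Finset.univ.val).sum = (Z0.map psum).sum)
    (hP : ∀ j, kMaxSum (Multiset.map m Finset.univ.val) j ≤ kMaxSum (Z0.map psum) j) :
    ∃ x : ι → ℕ, (∀ p, x p ≤ m p) ∧
      (Multiset.map x Finset.univ.val).sum = (Z0.map Prod.fst).sum ∧
      (∀ j, kMaxSum (Multiset.map x Finset.univ.val) j ≤ kMaxSum (Z0.map Prod.fst) j) ∧
      (Multiset.map (fun p => m p - x p) Finset.univ.val).sum = (Z0.map Prod.snd).sum ∧
      (∀ j, kMaxSum (Multiset.map (fun p => m p - x p) Finset.univ.val) j ≤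
        kMaxSum (Z0.map Prod.snd) j) := by
  classical
  set M := Multiset.map m Finset.univ.val with hM
  set C := Z0.map psum with hC
  set Mp := M + Multiset.replicate (Multiset.card C) 0 with hMp
  set Cp := C + Multiset.replicate (Multiset.card M) 0 with hCp
  have hcard : Multiset.card Mp = Multiset.card Cp := by
    rw [hMp, hCp]; simp; omega
  have hsump : Mp.sum = Cp.sum := by
    rw [hMp, hCp, Multiset.sum_add, Multiset.sum_add, Multiset.sum_replicate, Multiset.sum_replicate]
    simp [hsum]
  have hPp : ∀ j, kMaxSum Mp j ≤ kMaxSum Cp j := by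
    intro j
    rw [hMp, hCp, pad, pad]
    exact hP j
  have hchain := chain hcard hsump hPp
  set Zp := Z0 + Multiset.replicate (Multiset.card M) (0, 0) with hZp
  have hZpmap : Zp.map psum = Cp := by
    rw [hZp, Multiset.map_add, Multiset.map_replicate]
    rfl
  obtain ⟨Z, hZ1, hZ2, hZ3, hZ4, hZ5⟩ := goodChain hchain Zp hZpmap
  -- Zp components are padded Z0 components
  have hZpfst : Zp.map Prod.fst = Z0.map Prod.fst + Multiset.replicate (Multiset.card M) 0 := by
    rw [hZp, Multiset.map_add, Multiset.map_replicate]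
  have hZpsnd : Zp.map Prod.snd = Z0.map Prod.snd + Multiset.replicate (Multiset.card M) 0 := by
    rw [hZp, Multiset.map_add, Multiset.map_replicate]
  -- extract assignment
  have hle : Multiset.map m Finset.univ.val ≤ Z.map psum := by
    rw [hZ1, hMp]
    exact Multiset.le_add_right M _
  obtain ⟨g, hg1, hg2⟩ := ext (Finset.univ : Finset ι).nodup hle
  -- complement
  obtain ⟨W, hW⟩ := Multiset.le_iff_exists_add.1 hg2
  have hWsum : (W.map psum).sum = 0 := by
    have h1 : (Z.map psum).sum = Mp.sum := by rw [hZ1]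
    have h2 : Z.map psum = (Finset.univ.val.map g).map psum + W.map psum := by
      rw [hW, Multiset.map_add]
    have h3 : (Finset.univ.val.map g).map psum = Multiset.map m Finset.univ.val := by
      rw [Multiset.map_map]
      exact Multiset.map_congr rfl (fun a ha => hg1 a ha)
    have h4 : Mp.sum = M.sum := by
      rw [hMp, Multiset.sum_add, Multiset.sum_replicate]; simp
    rw [h2, h3, Multiset.sum_add, h4] at h1
    rw [hM] at h1
    omega
  have hWfst : (W.map Prod.fst).sum = 0 := by
    have := sum_map_add' W
    omega
  have hWsnd : (W.map Prod.snd).sum = 0 := by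
    have := sum_map_add' W
    omega
  have hmemuniv : ∀ p : ι, p ∈ (Finset.univ : Finset ι).val := fun p => Finset.mem_univ p
  have hxmap : Multiset.map (fun p => (g p).1) Finset.univ.val = (Finset.univ.val.map g).map Prod.fst := by
    rw [Multiset.map_map]; rfl
  have hymap : Multiset.map (fun p => m p - (g p).1) Finset.univ.val = (Finset.univ.val.map g).map Prod.snd := by
    rw [Multiset.map_map]
    apply Multiset.map_congr rfl
    intro p hp
    have := hg1 p hp
    show m p - (g p).1 = (g p).2
    omega
  have hfstsplit : (Z.map Prod.fst).sum = ((Finset.univ.val.map g).map Prod.fst).sum + (W.map Prod.fst).sum := by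
    rw [hW, Multiset.map_add, Multiset.sum_add]
  have hsndsplit : (Z.map Prod.snd).sum = ((Finset.univ.val.map g).map Prod.snd).sum + (W.map Prod.snd).sum := by
    rw [hW, Multiset.map_add, Multiset.sum_add]
  have hZpfsum : (Zp.map Prod.fst).sum = (Z0.map Prod.fst).sum := by
    rw [hZpfst, Multiset.sum_add, Multiset.sum_replicate]; simp
  have hZpssum : (Zp.map Prod.snd).sum = (Z0.map Prod.snd).sum := by
    rw [hZpsnd, Multiset.sum_add, Multiset.sum_replicate]; simp
  have hfstle : ∀ j, kMaxSum ((Finset.univ.val.map g).map Prod.fst) j ≤ kMaxSum (Z0.map Prod.fst) j := by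
    intro j
    calc kMaxSum ((Finset.univ.val.map g).map Prod.fst) j
        ≤ kMaxSum (Z.map Prod.fst) j := kMaxSum_mono_M (Multiset.map_le_map hg2) j
      _ ≤ kMaxSum (Zp.map Prod.fst) j := hZ3 j
      _ = kMaxSum (Z0.map Prod.fst) j := by rw [hZpfst, pad]
  have hsndle : ∀ j, kMaxSum ((Finset.univ.val.map g).map Prod.snd) j ≤ kMaxSum (Z0.map Prod.snd) j := by
    intro j
    calc kMaxSum ((Finset.univ.val.map g).map Prod.snd) j
        ≤ kMaxSum (Z.map Prod.snd) j := kMaxSum_mono_M (Multiset.map_le_map hg2) j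
      _ ≤ kMaxSum (Zp.map Prod.snd) j := hZ5 j
      _ = kMaxSum (Z0.map Prod.snd) j := by rw [hZpsnd, pad]
  refine ⟨fun p => (g p).1, ?_, ?_, ?_, ?_, ?_⟩
  · intro p
    show (g p).1 ≤ m p
    have := hg1 p (hmemuniv p)
    omega
  · rw [hxmap]
    have := hZ2
    rw [hZpfsum] at this
    omega
  · intro j
    rw [hxmap]
    exact hfstle j
  · rw [hymap]
    have := hZ4
    rw [hZpssum] at this
    omega
  · intro j
    rw [hymap]
    exact hsndle j

section Sorting

variable {s : ℕ}

lemma antitone_of_adj {f : Fin s → ℕ}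
    (h : ∀ (i : ℕ) (hi : i + 1 < s), f ⟨i+1, hi⟩ ≤ f ⟨i, by omega⟩) : Antitone f := by
  have key : ∀ (n : ℕ) (a b : Fin s), (b : ℕ) = (a : ℕ) + n → f b ≤ f a := by
    intro n
    induction n with
    | zero =>
      intro a b hab
      have : a = b := Fin.ext (by omega)
      rw [this]
    | succ n ih =>
      intro a b hab
      have hbs : (a : ℕ) + n + 1 < s := by have := b.isLt; omega
      have hb : b = ⟨(a : ℕ) + n + 1, hbs⟩ := Fin.ext (show (b : ℕ) = (a : ℕ) + n + 1 by omega)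
      have h1 : f b ≤ f ⟨(a : ℕ) + n, by omega⟩ :=
        (congrArg f hb).le.trans (h ((a : ℕ) + n) hbs)
      exact h1.trans (ih a ⟨(a : ℕ) + n, by omega⟩ rfl)
  intro a b hab
  exact key ((b : ℕ) - (a : ℕ)) a b (by omega)

lemma exists_adj_violation {f : Fin s → ℕ} (h : ¬ Antitone f) :
    ∃ (i : ℕ) (hi : i + 1 < s), f ⟨i, by omega⟩ < f ⟨i+1, hi⟩ := by
  by_contra hno
  push_neg at hno
  apply h
  apply antitone_of_adj
  intro i hi
  exact hno i hi

lemma two_point_decomp (j0 j1 : Fin s) (hne : j1 ≠ j0) (F : Fin s → ℕ) :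
    Multiset.map F Finset.univ.val =
      F j0 ::ₘ F j1 ::ₘ Multiset.map F ((Finset.univ.val.erase j0).erase j1) := by
  have h1 : j0 ∈ (Finset.univ : Finset (Fin s)).val := Finset.mem_univ j0
  have h2 : j1 ∈ (Finset.univ : Finset (Fin s)).val.erase j0 := by
    rw [(Finset.univ.nodup).mem_erase_iff]
    exact ⟨hne, Finset.mem_univ j1⟩
  conv_lhs => rw [← Multiset.cons_erase h1, ← Multiset.cons_erase h2]
  rw [Multiset.map_cons, Multiset.map_cons]

lemma mem_rest {j0 j1 l : Fin s} (hl : l ∈ (Finset.univ.val.erase j0).erase j1) :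
    l ≠ j0 ∧ l ≠ j1 := by
  have hnd : ((Finset.univ : Finset (Fin s)).val.erase j0).Nodup := (Finset.univ.nodup).erase j0
  rw [hnd.mem_erase_iff] at hl
  obtain ⟨hne1, hl⟩ := hl
  rw [(Finset.univ.nodup).mem_erase_iff] at hl
  exact ⟨hl.1, hne1⟩

lemma sortRow (t d : Fin s → ℕ) (ht : Antitone t) (hd : Antitone d) :
    ∀ (f : Fin s → ℕ), (∀ j, t j ≤ f j ∧ f j ≤ d j) →
    ∃ g, Antitone g ∧ (∀ j, t j ≤ g j ∧ g j ≤ d j) ∧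
      (Multiset.map (fun j => g j - t j) Finset.univ.val).sum
        = (Multiset.map (fun j => f j - t j) Finset.univ.val).sum ∧
      (∀ jj, kMaxSum (Multiset.map (fun j => g j - t j) Finset.univ.val) jj
        ≤ kMaxSum (Multiset.map (fun j => f j - t j) Finset.univ.val) jj) ∧
      (Multiset.map (fun j => d j - g j) Finset.univ.val).sum
        = (Multiset.map (fun j => d j - f j) Finset.univ.val).sum ∧
      (∀ jj, kMaxSum (Multiset.map (fun j => d j - g j) Finset.univ.val) jj
        ≤ kMaxSum (Multiset.map (fun j => d j - f j) Finset.univ.val) jj) := by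
  suffices H : ∀ (n : ℕ) (f : Fin s → ℕ), (∑ l : Fin s, (l : ℕ) * f l) < n →
      (∀ j, t j ≤ f j ∧ f j ≤ d j) →
      ∃ g, Antitone g ∧ (∀ j, t j ≤ g j ∧ g j ≤ d j) ∧
      (Multiset.map (fun j => g j - t j) Finset.univ.val).sum
        = (Multiset.map (fun j => f j - t j) Finset.univ.val).sum ∧
      (∀ jj, kMaxSum (Multiset.map (fun j => g j - t j) Finset.univ.val) jj
        ≤ kMaxSum (Multiset.map (fun j => f j - t j) Finset.univ.val) jj) ∧
      (Multiset.map (fun j => d j - g j) Finset.univ.val).sum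
        = (Multiset.map (fun j => d j - f j) Finset.univ.val).sum ∧
      (∀ jj, kMaxSum (Multiset.map (fun j => d j - g j) Finset.univ.val) jj
        ≤ kMaxSum (Multiset.map (fun j => d j - f j) Finset.univ.val) jj) by
    intro f hf
    exact H ((∑ l : Fin s, (l : ℕ) * f l) + 1) f (by omega) hf
  intro n
  induction n with
  | zero => intro f h; omega
  | succ n ih =>
    intro f hΦ hbounds
    by_cases hant : Antitone f
    · exact ⟨f, hant, hbounds, rfl, fun jj => le_rfl, rfl, fun jj => le_rfl⟩
    obtain ⟨i, hi, hlt⟩ := exists_adj_violation hant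
    set j0 : Fin s := ⟨i, by omega⟩ with hj0
    set j1 : Fin s := ⟨i+1, hi⟩ with hj1
    have hne : j1 ≠ j0 := by
      intro h
      have := congrArg Fin.val h
      simp [hj0, hj1] at this
    have hle01 : j0 ≤ j1 := by
      rw [Fin.le_def]; simp [hj0, hj1]
    set f' : Fin s → ℕ := fun l => if l = j0 then f j1 else if l = j1 then f j0 else f l with hf'
    have hf'j0 : f' j0 = f j1 := by simp [hf']
    have hf'j1 : f' j1 = f j0 := by simp [hf', hne]
    have hf'other : ∀ l, l ≠ j0 → l ≠ j1 → f' l = f l := by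
      intro l h1 h2; simp [hf', h1, h2]
    -- numeric facts
    have htj : t j1 ≤ t j0 := ht hle01
    have hdj : d j1 ≤ d j0 := hd hle01
    have hb0 := hbounds j0
    have hb1 := hbounds j1
    -- bounds for f'
    have hbounds' : ∀ j, t j ≤ f' j ∧ f' j ≤ d j := by
      intro l
      by_cases h1 : l = j0
      · subst h1; rw [hf'j0]; constructor <;> omega
      by_cases h2 : l = j1
      · subst h2; rw [hf'j1]; constructor <;> omega
      · rw [hf'other l h1 h2]; exact hbounds l
    -- potential decreases
    have hΦ' : (∑ l : Fin s, (l : ℕ) * f' l) < ∑ l : Fin s, (l : ℕ) * f l := by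
      have hsplit : ∀ (F : Fin s → ℕ), (∑ l : Fin s, (l : ℕ) * F l) =
          (j0 : ℕ) * F j0 + ((j1 : ℕ) * F j1 +
            ∑ l ∈ (Finset.univ.erase j0).erase j1, (l : ℕ) * F l) := by
        intro F
        rw [Finset.add_sum_erase _ (fun l : Fin s => (l : ℕ) * F l)
          (by rw [Finset.mem_erase]; exact ⟨hne, Finset.mem_univ j1⟩)]
        rw [Finset.add_sum_erase _ (fun l : Fin s => (l : ℕ) * F l) (Finset.mem_univ j0)]
      rw [hsplit f, hsplit f']
      have hrest : ∑ l ∈ (Finset.univ.erase j0).erase j1, (l : ℕ) * f' l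
          = ∑ l ∈ (Finset.univ.erase j0).erase j1, (l : ℕ) * f l := by
        apply Finset.sum_congr rfl
        intro l hl
        rw [Finset.mem_erase, Finset.mem_erase] at hl
        rw [hf'other l hl.2.1 hl.1]
      rw [hrest, hf'j0, hf'j1]
      have hv0 : (j0 : ℕ) = i := rfl
      have hv1 : (j1 : ℕ) = i + 1 := rfl
      rw [hv0, hv1]
      have : i * f j1 + (i+1) * f j0 < i * f j0 + (i+1) * f j1 := by nlinarith
      omega
    -- multiset domination for (· - t)
    set R := ((Finset.univ : Finset (Fin s)).val.erase j0).erase j1 with hR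
    have hdect : ∀ (F : Fin s → ℕ), Multiset.map (fun j => F j - t j) Finset.univ.val
        = (F j0 - t j0) ::ₘ (F j1 - t j1) ::ₘ Multiset.map (fun j => F j - t j) R :=
      fun F => two_point_decomp j0 j1 hne _
    have hdecd : ∀ (F : Fin s → ℕ), Multiset.map (fun j => d j - F j) Finset.univ.val
        = (d j0 - F j0) ::ₘ (d j1 - F j1) ::ₘ Multiset.map (fun j => d j - F j) R :=
      fun F => two_point_decomp j0 j1 hne _
    have hrestmap : ∀ (G : (Fin s → ℕ) → Fin s → ℕ),
        (∀ l, l ≠ j0 → l ≠ j1 → G f' l = G f l) →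
        Multiset.map (G f') R = Multiset.map (G f) R := by
      intro G hG
      apply Multiset.map_congr rfl
      intro l hl
      obtain ⟨h1, h2⟩ := mem_rest hl
      exact hG l h1 h2
    have hrest1 : Multiset.map (fun j => f' j - t j) R = Multiset.map (fun j => f j - t j) R := by
      apply Multiset.map_congr rfl
      intro l hl
      obtain ⟨h1, h2⟩ := mem_rest hl
      rw [hf'other l h1 h2]
    have hrest2 : Multiset.map (fun j => d j - f' j) R = Multiset.map (fun j => d j - f j) R := by
      apply Multiset.map_congr rfl
      intro l hl
      obtain ⟨h1, h2⟩ := mem_rest hl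
      rw [hf'other l h1 h2]
    have hsum1 : (Multiset.map (fun j => f' j - t j) Finset.univ.val).sum
        = (Multiset.map (fun j => f j - t j) Finset.univ.val).sum := by
      rw [hdect f, hdect f', hrest1, hf'j0, hf'j1]
      simp only [Multiset.sum_cons]
      omega
    have hsum2 : (Multiset.map (fun j => d j - f' j) Finset.univ.val).sum
        = (Multiset.map (fun j => d j - f j) Finset.univ.val).sum := by
      rw [hdecd f, hdecd f', hrest2, hf'j0, hf'j1]
      simp only [Multiset.sum_cons]
      omega
    have hP1 : ∀ jj, kMaxSum (Multiset.map (fun j => f' j - t j) Finset.univ.val) jj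
        ≤ kMaxSum (Multiset.map (fun j => f j - t j) Finset.univ.val) jj := by
      intro jj
      rw [hdect f, hdect f', hrest1, hf'j0, hf'j1]
      apply pairdom (by omega) _ _ _ jj
      · apply le_max_of_le_right; omega
      · apply le_max_of_le_right; omega
    have hP2 : ∀ jj, kMaxSum (Multiset.map (fun j => d j - f' j) Finset.univ.val) jj
        ≤ kMaxSum (Multiset.map (fun j => d j - f j) Finset.univ.val) jj := by
      intro jj
      rw [hdecd f, hdecd f', hrest2, hf'j0, hf'j1]
      apply pairdom (by omega) _ _ _ jj
      · apply le_max_of_le_left; omega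
      · apply le_max_of_le_left; omega
    obtain ⟨g, hg1, hg2, hg3, hg4, hg5, hg6⟩ := ih f' (by omega) hbounds'
    exact ⟨g, hg1, hg2, hg3.trans hsum1, fun jj => (hg4 jj).trans (hP1 jj),
      hg5.trans hsum2, fun jj => (hg6 jj).trans (hP2 jj)⟩

end Sorting

lemma map_val_eq_sum_singleton {α β : Type*} (t : Finset α) (F : α → β) :
    t.val.map F = ∑ a ∈ t, ({F a} : Multiset β) := by
  induction t using Finset.cons_induction with
  | empty => simp
  | cons a t ha ih =>
    rw [Finset.sum_cons, Finset.cons_val, Multiset.map_cons, ih, ← Multiset.singleton_add]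

lemma sum_tupleMul {k s : ℕ} (h : Fin k → Fin s → ℕ) :
    (∑ i : Fin k, Multiset.map (h i) Finset.univ.val)
      = Multiset.map (fun p : Fin k × Fin s => h p.1 p.2) Finset.univ.val := by
  rw [map_val_eq_sum_singleton]
  rw [← Finset.univ_product_univ, Finset.sum_product]
  apply Finset.sum_congr rfl
  intro i _
  rw [map_val_eq_sum_singleton]

lemma sum_multiset_sum {k : ℕ} (X : Fin k → Multiset ℕ) :
    (∑ i : Fin k, X i).sum = ∑ i : Fin k, (X i).sum := by
  induction (Finset.univ : Finset (Fin k)) using Finset.cons_induction with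
  | empty => simp
  | cons a t ha ih => rw [Finset.sum_cons, Finset.sum_cons, Multiset.sum_add, ih]

lemma sumRowsP {k : ℕ} (X Y : Fin k → Multiset ℕ)
    (h : ∀ i j, kMaxSum (X i) j ≤ kMaxSum (Y i) j) :
    ∀ j, kMaxSum (∑ i : Fin k, X i) j ≤ kMaxSum (∑ i : Fin k, Y i) j := by
  suffices H : ∀ (t : Finset (Fin k)) (j : ℕ),
      kMaxSum (∑ i ∈ t, X i) j ≤ kMaxSum (∑ i ∈ t, Y i) j from H Finset.univ
  intro t
  induction t using Finset.cons_induction with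
  | empty => intro j; rw [Finset.sum_empty, Finset.sum_empty]
  | cons a t ha ih =>
    intro j
    rw [Finset.sum_cons, Finset.sum_cons]
    exact addDom (h a) ih j

end KM

lemma tupleMul_def {s : ℕ} (a : Fin s → ℕ) : tupleMul a = Multiset.map a Finset.univ.val := rfl

theorem stmt0 (k s : ℕ) (hk : 0 < k) (hs : 0 < s)
    (d t : Fin k → Fin s → ℕ)
    (hd : ∀ i, Antitone (d i)) (ht : ∀ i, Antitone (t i))
    (hdt : ∀ i j, t i j ≤ d i j)
    (A B : Fin s → ℕ) (hA : Antitone A) (hB : Antitone B)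
    (hmaj : Majorized (∑ i : Fin k, tupleMul (fun j => d i j - t i j))
            (tupleMul (fun j => A j + B j))) :
    ∃ f : Fin k → Fin s → ℕ,
      (∀ i, Antitone (f i)) ∧
      (∀ i j, t i j ≤ f i j ∧ f i j ≤ d i j) ∧
      Majorized (∑ i : Fin k, tupleMul (fun j => f i j - t i j)) (tupleMul A) ∧
      Majorized (∑ i : Fin k, tupleMul (fun j => d i j - f i j)) (tupleMul B) := by
  classical
  obtain ⟨hsum0, hP0⟩ := hmaj
  set Z0 : Multiset (ℕ × ℕ) := Multiset.map (fun j : Fin s => (A j, B j)) Finset.univ.val with hZ0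
  have hZ0psum : Z0.map KM.psum = tupleMul (fun j => A j + B j) := by
    rw [hZ0, Multiset.map_map, tupleMul_def]; rfl
  have hZ0fst : Z0.map Prod.fst = tupleMul A := by
    rw [hZ0, Multiset.map_map, tupleMul_def]; rfl
  have hZ0snd : Z0.map Prod.snd = tupleMul B := by
    rw [hZ0, Multiset.map_map, tupleMul_def]; rfl
  set m : Fin k × Fin s → ℕ := fun p => d p.1 p.2 - t p.1 p.2 with hm
  have hMeq : (∑ i : Fin k, tupleMul fun j => d i j - t i j)
      = Multiset.map m Finset.univ.val := by
    simp only [tupleMul_def]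
    exact KM.sum_tupleMul (fun i j => d i j - t i j)
  have hsum1 : (Multiset.map m Finset.univ.val).sum = (Z0.map KM.psum).sum := by
    rw [← hMeq, hZ0psum]; exact hsum0
  have hP1 : ∀ j, kMaxSum (Multiset.map m Finset.univ.val) j ≤ kMaxSum (Z0.map KM.psum) j := by
    intro j; rw [← hMeq, hZ0psum]; exact hP0 j
  obtain ⟨x, hx1, hx2, hx3, hx4, hx5⟩ := KM.coreAssign m Z0 hsum1 hP1
  set f0 : Fin k → Fin s → ℕ := fun i j => t i j + x (i, j) with hf0
  have hmval : ∀ i j, m (i, j) = d i j - t i j := fun i j => rfl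
  have hb0 : ∀ i, ∀ j, t i j ≤ f0 i j ∧ f0 i j ≤ d i j := by
    intro i j
    have h1 := hx1 (i, j)
    have h2 := hdt i j
    rw [hmval] at h1
    constructor
    · show t i j ≤ t i j + x (i, j); omega
    · show t i j + x (i, j) ≤ d i j; omega
  have hrow1 : ∀ i, Multiset.map (fun j => f0 i j - t i j) Finset.univ.val
      = Multiset.map (fun j => x (i, j)) Finset.univ.val := by
    intro i
    apply Multiset.map_congr rfl
    intro j _
    show t i j + x (i, j) - t i j = x (i, j)
    omega
  have hrow2 : ∀ i, Multiset.map (fun j => d i j - f0 i j) Finset.univ.val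
      = Multiset.map (fun j => m (i, j) - x (i, j)) Finset.univ.val := by
    intro i
    apply Multiset.map_congr rfl
    intro j _
    show d i j - (t i j + x (i, j)) = (d i j - t i j) - x (i, j)
    have := hdt i j
    omega
  have hprodx : (∑ i : Fin k, Multiset.map (fun j => x (i, j)) Finset.univ.val)
      = Multiset.map x Finset.univ.val := by
    rw [KM.sum_tupleMul (fun i j => x (i, j))]
  have hprody : (∑ i : Fin k, Multiset.map (fun j => m (i, j) - x (i, j)) Finset.univ.val)
      = Multiset.map (fun p => m p - x p) Finset.univ.val := by
    rw [KM.sum_tupleMul (fun i j => m (i, j) - x (i, j))]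
  have hsorted := fun i => KM.sortRow (t i) (d i) (ht i) (hd i) (f0 i) (hb0 i)
  choose g hg1 hg2 hg3 hg4 hg5 hg6 using hsorted
  refine ⟨g, hg1, fun i j => hg2 i j, ⟨?_, ?_⟩, ⟨?_, ?_⟩⟩
  · -- sum, A side
    rw [tupleMul_def] at *
    rw [KM.sum_multiset_sum, ← hZ0fst]
    calc ∑ i : Fin k, (Multiset.map (fun j => g i j - t i j) Finset.univ.val).sum
        = ∑ i : Fin k, (Multiset.map (fun j => f0 i j - t i j) Finset.univ.val).sum :=
          Finset.sum_congr rfl (fun i _ => hg3 i)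
      _ = ∑ i : Fin k, (Multiset.map (fun j => x (i, j)) Finset.univ.val).sum :=
          Finset.sum_congr rfl (fun i _ => by rw [hrow1 i])
      _ = (∑ i : Fin k, Multiset.map (fun j => x (i, j)) Finset.univ.val).sum :=
          (KM.sum_multiset_sum _).symm
      _ = (Multiset.map x Finset.univ.val).sum := by rw [hprodx]
      _ = (Z0.map Prod.fst).sum := hx2
  · -- kMaxSum, A side
    intro j
    simp only [tupleMul_def]
    calc kMaxSum (∑ i : Fin k, Multiset.map (fun j => g i j - t i j) Finset.univ.val) j
        ≤ kMaxSum (∑ i : Fin k, Multiset.map (fun j => f0 i j - t i j) Finset.univ.val) j :=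
          KM.sumRowsP _ _ (fun i jj => hg4 i jj) j
      _ = kMaxSum (Multiset.map x Finset.univ.val) j := by
          rw [show (∑ i : Fin k, Multiset.map (fun j => f0 i j - t i j) Finset.univ.val)
            = Multiset.map x Finset.univ.val by
              rw [← hprodx]; exact Finset.sum_congr rfl (fun i _ => hrow1 i)]
      _ ≤ kMaxSum (Z0.map Prod.fst) j := hx3 j
      _ = kMaxSum (Multiset.map A Finset.univ.val) j := by rw [hZ0fst, tupleMul_def]
  · -- sum, B side
    rw [tupleMul_def] at *
    rw [KM.sum_multiset_sum, ← hZ0snd]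
    calc ∑ i : Fin k, (Multiset.map (fun j => d i j - g i j) Finset.univ.val).sum
        = ∑ i : Fin k, (Multiset.map (fun j => d i j - f0 i j) Finset.univ.val).sum :=
          Finset.sum_congr rfl (fun i _ => hg5 i)
      _ = ∑ i : Fin k, (Multiset.map (fun j => m (i, j) - x (i, j)) Finset.univ.val).sum :=
          Finset.sum_congr rfl (fun i _ => by rw [hrow2 i])
      _ = (∑ i : Fin k, Multiset.map (fun j => m (i, j) - x (i, j)) Finset.univ.val).sum :=
          (KM.sum_multiset_sum _).symm
      _ = (Multiset.map (fun p => m p - x p) Finset.univ.val).sum := by rw [hprody]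
      _ = (Z0.map Prod.snd).sum := hx4
  · -- kMaxSum, B side
    intro j
    simp only [tupleMul_def]
    calc kMaxSum (∑ i : Fin k, Multiset.map (fun j => d i j - g i j) Finset.univ.val) j
        ≤ kMaxSum (∑ i : Fin k, Multiset.map (fun j => d i j - f0 i j) Finset.univ.val) j :=
          KM.sumRowsP _ _ (fun i jj => hg6 i jj) j
      _ = kMaxSum (Multiset.map (fun p => m p - x p) Finset.univ.val) j := by
          rw [show (∑ i : Fin k, Multiset.map (fun j => d i j - f0 i j) Finset.univ.val)
            = Multiset.map (fun p => m p - x p) Finset.univ.val by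
              rw [← hprody]; exact Finset.sum_congr rfl (fun i _ => hrow2 i)]
      _ ≤ kMaxSum (Z0.map Prod.snd) j := hx5 j
      _ = kMaxSum (Multiset.map B Finset.univ.val) j := by rw [hZ0snd, tupleMul_def]
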